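/- arXiv:2010.15671 — 7 statements merged into one kernel-verified Lean document; each statement's English description precedes it below -/
import Mathlib

section
/- For any fuzzy labeled graph G = ⟨V, E, L, Σ_V, Σ_E⟩ with V nonempty, there exists a largest bisimulation of G (a bisimulation of G that contains every bisimulation of G), and this largest bisimulation is an equivalence relation on V. -/
/-- A fuzzy labeled graph `G = ⟨V, E, L, Σ_V, Σ_E⟩`: the fuzzy set of labeled
edges `E : V × Σ_E × V → [0,1]` and the labeling function `L : V → (Σ_V → [0,1])`. -/
structure FuzzyGraph (V SV SE : Type*) where
  edge : V → SE → V → unitInterval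
  lab : V → SV → unitInterval

/-- A nonempty binary relation `Z ⊆ V × V` is a (crisp) bisimulation of `G`. -/
def IsBisimulation {V SV SE : Type*} (G : FuzzyGraph V SV SE) (Z : V → V → Prop) : Prop :=
  (∃ x x', Z x x') ∧
  (∀ x x', Z x x' → G.lab x = G.lab x') ∧
  (∀ x x' y (r : SE), Z x x' → 0 < G.edge x r y →
      ∃ y', Z y y' ∧ G.edge x r y ≤ G.edge x' r y') ∧
  (∀ x x' y' (r : SE), Z x x' → 0 < G.edge x' r y' →
      ∃ y, Z y y' ∧ G.edge x' r y' ≤ G.edge x r y)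

lemma eq_isBisim {V SV SE : Type*} [Nonempty V] (G : FuzzyGraph V SV SE) :
    IsBisimulation G (· = ·) := by
  refine ⟨⟨Classical.arbitrary V, Classical.arbitrary V, rfl⟩, ?_, ?_, ?_⟩
  · rintro x x' rfl; rfl
  · rintro x x' y r rfl _; exact ⟨y, rfl, le_rfl⟩
  · rintro x x' y' r rfl _; exact ⟨y', rfl, le_rfl⟩

lemma flip_isBisim {V SV SE : Type*} (G : FuzzyGraph V SV SE) {Z : V → V → Prop}
    (h : IsBisimulation G Z) : IsBisimulation G (fun a b => Z b a) := by
  obtain ⟨⟨x, x', hx⟩, hlab, hf, hb⟩ := h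
  refine ⟨⟨x', x, hx⟩, fun a b hab => (hlab b a hab).symm, ?_, ?_⟩
  · intro x x' y r hz he
    obtain ⟨y', hy', hle⟩ := hb x' x y r hz he
    exact ⟨y', hy', hle⟩
  · intro x x' y' r hz he
    obtain ⟨y, hy, hle⟩ := hf x' x y' r hz he
    exact ⟨y, hy, hle⟩

lemma comp_isBisim {V SV SE : Type*} (G : FuzzyGraph V SV SE) {Z1 Z2 : V → V → Prop}
    (h1 : IsBisimulation G Z1) (h2 : IsBisimulation G Z2)
    (hne : ∃ a b c, Z1 a b ∧ Z2 b c) :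
    IsBisimulation G (fun a c => ∃ b, Z1 a b ∧ Z2 b c) := by
  obtain ⟨_, hlab1, hf1, hb1⟩ := h1
  obtain ⟨_, hlab2, hf2, hb2⟩ := h2
  refine ⟨?_, ?_, ?_, ?_⟩
  · obtain ⟨a, b, c, hab, hbc⟩ := hne; exact ⟨a, c, b, hab, hbc⟩
  · rintro x x' ⟨b, h1, h2⟩; exact (hlab1 x b h1).trans (hlab2 b x' h2)
  · rintro x x' y r ⟨b, hxb, hbx'⟩ he
    obtain ⟨y1, hy1, hle1⟩ := hf1 x b y r hxb he
    obtain ⟨y2, hy2, hle2⟩ := hf2 b x' y1 r hbx' (lt_of_lt_of_le he hle1)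
    exact ⟨y2, ⟨y1, hy1, hy2⟩, hle1.trans hle2⟩
  · rintro x x' y' r ⟨b, hxb, hbx'⟩ he
    obtain ⟨y1, hy1, hle1⟩ := hb2 b x' y' r hbx' he
    obtain ⟨y2, hy2, hle2⟩ := hb1 x b y1 r hxb (lt_of_lt_of_le he hle1)
    exact ⟨y2, ⟨y1, hy2, hy1⟩, hle1.trans hle2⟩

/-- The largest bisimulation of a fuzzy graph (with nonempty vertex set) exists
and is an equivalence relation. -/
theorem largest_bisimulation_exists_and_equivalence {V SV SE : Type*} [Nonempty V]
    (G : FuzzyGraph V SV SE) :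
    ∃ Z : V → V → Prop, IsBisimulation G Z ∧
      (∀ Z' : V → V → Prop, IsBisimulation G Z' → ∀ x x', Z' x x' → Z x x') ∧
      Equivalence Z := by
  refine ⟨fun x x' => ∃ Z', IsBisimulation G Z' ∧ Z' x x', ?_, ?_, ?_⟩
  · refine ⟨?_, ?_, ?_, ?_⟩
    · exact ⟨Classical.arbitrary V, Classical.arbitrary V, _, eq_isBisim G, rfl⟩
    · rintro x x' ⟨Z', hZ', hxx'⟩; exact hZ'.2.1 x x' hxx'
    · rintro x x' y r ⟨Z', hZ', hxx'⟩ he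
      obtain ⟨y', hy', hle⟩ := hZ'.2.2.1 x x' y r hxx' he
      exact ⟨y', ⟨Z', hZ', hy'⟩, hle⟩
    · rintro x x' y' r ⟨Z', hZ', hxx'⟩ he
      obtain ⟨y, hy, hle⟩ := hZ'.2.2.2 x x' y' r hxx' he
      exact ⟨y, ⟨Z', hZ', hy⟩, hle⟩
  · intro Z' hZ' x x' h; exact ⟨Z', hZ', h⟩
  · refine ⟨fun x => ⟨_, eq_isBisim G, rfl⟩, ?_, ?_⟩
    · rintro x y ⟨Z', hZ', h⟩; exact ⟨_, flip_isBisim G hZ', h⟩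
    · rintro x y z ⟨Z1, h1, hxy⟩ ⟨Z2, h2, hyz⟩
      exact ⟨_, comp_isBisim G h1 h2 ⟨x, y, z, hxy, hyz⟩, y, hxy, hyz⟩
end

section
/- Let G = ⟨V, E, L, Σ_V, Σ_E⟩ be a finite fuzzy labeled graph with V nonempty, and let ℚ be a partition of V. Then ℚ is the partition corresponding to the largest bisimulation of G if and only if ℚ is the coarsest stable refinement of ℙ₀, i.e., ℚ is a stable refinement of ℙ₀ and every stable refinement of ℙ₀ is a refinement of ℚ. -/
instance : Fact ((0:ℝ) ≤ 1) := ⟨zero_le_one⟩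


/-- `sup E(x,r,Y)`, the supremum being taken in the complete lattice `[0,1]`. -/
noncomputable def supE {V SV SE : Type*} (G : FuzzyGraph V SV SE)
    (x : V) (r : SE) (Y : Set V) : unitInterval :=
  ⨆ y ∈ Y, G.edge x r y

/-- A set `X ⊆ V` is stable w.r.t. `⟨Y,r⟩` if `sup E(x,r,Y) = sup E(x',r,Y)`
for all `x, x' ∈ X`. -/
def StableWith {V SV SE : Type*} (G : FuzzyGraph V SV SE)
    (X Y : Set V) (r : SE) : Prop :=
  ∀ x ∈ X, ∀ x' ∈ X, supE G x r Y = supE G x' r Y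

/-- A partition `ℙ` is stable w.r.t. `⟨Y,r⟩` if every block of `ℙ` is. -/
def PartStableWith {V SV SE : Type*} (G : FuzzyGraph V SV SE)
    (P : Set (Set V)) (Y : Set V) (r : SE) : Prop :=
  ∀ X ∈ P, StableWith G X Y r

/-- A partition `ℙ` is stable if it is stable w.r.t. `⟨Y,r⟩`
for all blocks `Y ∈ ℙ` and all edge labels `r`. -/
def PartStable {V SV SE : Type*} (G : FuzzyGraph V SV SE) (P : Set (Set V)) : Prop :=
  ∀ Y ∈ P, ∀ r : SE, PartStableWith G P Y r

/-- `ℙ` is a refinement of `ℚ` if every block of `ℙ` is contained in some block of `ℚ`. -/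
def Refines {V : Type*} (P Q : Set (Set V)) : Prop :=
  ∀ X ∈ P, ∃ Y ∈ Q, X ⊆ Y

/-- The set of equivalence classes of a relation `Z`. -/
def classesOf {V : Type*} (Z : V → V → Prop) : Set (Set V) :=
  {s | ∃ x, s = {x' | Z x x'}}

/-- `ℙ₀`: the partition of `V` corresponding to the equivalence relation
`{(x,x') | L(x) = L(x') and sup E(x,r,V) = sup E(x',r,V) for all r}`. -/
noncomputable def P0 {V SV SE : Type*} (G : FuzzyGraph V SV SE) : Set (Set V) :=
  classesOf (fun x x' => G.lab x = G.lab x' ∧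
    ∀ r : SE, supE G x r Set.univ = supE G x' r Set.univ)


section AuxLemmas

variable {V SV SE : Type*} (G : FuzzyGraph V SV SE)

lemma le_supE {x : V} {r : SE} {Y : Set V} {y : V} (hy : y ∈ Y) :
    G.edge x r y ≤ supE G x r Y := le_biSup _ hy

lemma supE_le {x : V} {r : SE} {Y : Set V} {c : unitInterval}
    (h : ∀ y ∈ Y, G.edge x r y ≤ c) : supE G x r Y ≤ c := iSup₂_le h

lemma supE_attained [Fintype V] {x : V} {r : SE} {Y : Set V} (hY : Y.Nonempty) :
    ∃ y ∈ Y, supE G x r Y = G.edge x r y := by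
  have h1 : supE G x r Y = sSup (G.edge x r '' Y) := sSup_image.symm
  have h2 : sSup (G.edge x r '' Y) ∈ G.edge x r '' Y :=
    Set.Nonempty.csSup_mem (hY.image _) (Y.toFinite.image _)
  obtain ⟨y, hy, hEq⟩ := h2
  exact ⟨y, hy, by rw [h1, ← hEq]⟩

lemma supE_le_of_transfer {x x' : V} {r : SE} {Y Y' : Set V}
    (H : ∀ y ∈ Y, 0 < G.edge x r y → ∃ y' ∈ Y', G.edge x r y ≤ G.edge x' r y') :
    supE G x r Y ≤ supE G x' r Y' := by
  refine supE_le G fun y hy => ?_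
  by_cases hpos : 0 < G.edge x r y
  · obtain ⟨y', hy', hle⟩ := H y hy hpos
    exact hle.trans (le_supE G hy')
  · exact le_trans (not_lt.mp hpos) (by exact unitInterval.nonneg')

lemma partition_block_eq {V : Type*} {P : Set (Set V)} (hP : Setoid.IsPartition P)
    {X X' : Set V} (hX : X ∈ P) (hX' : X' ∈ P) (h : (X ∩ X').Nonempty) : X = X' := by
  obtain ⟨a, haX, haX'⟩ := h
  obtain ⟨b, _, huniq⟩ := hP.2 a
  rw [huniq X ⟨hX, haX⟩, huniq X' ⟨hX', haX'⟩]

lemma partition_block_nonempty {V : Type*} {P : Set (Set V)} (hP : Setoid.IsPartition P)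
    {X : Set V} (hX : X ∈ P) : X.Nonempty :=
  Set.nonempty_iff_ne_empty.mpr (fun h => hP.1 (h ▸ hX))

lemma refines_antisymm_aux {V : Type*} {P Q : Set (Set V)}
    (hP : Setoid.IsPartition P) (hQ : Setoid.IsPartition Q)
    (h1 : Refines P Q) (h2 : Refines Q P) : P ⊆ Q := by
  intro X hX
  obtain ⟨Y, hY, hXY⟩ := h1 X hX
  obtain ⟨X', hX', hYX'⟩ := h2 Y hY
  obtain ⟨a, ha⟩ := partition_block_nonempty hP hX
  have hXX' : X = X' := partition_block_eq hP hX hX' ⟨a, ha, hYX' (hXY ha)⟩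
  have : X = Y := Set.Subset.antisymm hXY (hXX' ▸ hYX')
  exact this ▸ hY

lemma refines_antisymm {V : Type*} {P Q : Set (Set V)}
    (hP : Setoid.IsPartition P) (hQ : Setoid.IsPartition Q)
    (h1 : Refines P Q) (h2 : Refines Q P) : P = Q :=
  Set.Subset.antisymm (refines_antisymm_aux hP hQ h1 h2) (refines_antisymm_aux hQ hP h2 h1)

end AuxLemmas

/-- For a finite fuzzy graph `G` with nonempty vertex set: a partition `ℚ` of `V`
is the partition corresponding to the largest bisimulation of `G` iff it is the
coarsest stable refinement of `ℙ₀`. -/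
theorem partition_of_largest_bisim_iff_coarsest_stable_refinement
    {V SV SE : Type*} [Fintype V] [Fintype SV] [Fintype SE] [Nonempty V]
    (G : FuzzyGraph V SV SE) (Z : V → V → Prop)
    (hZ : IsBisimulation G Z ∧
      ∀ Z' : V → V → Prop, IsBisimulation G Z' → ∀ x x', Z' x x' → Z x x')
    (Q : Set (Set V)) (hQ : Setoid.IsPartition Q) :
    Q = classesOf Z ↔
      (Refines Q (P0 G) ∧ PartStable G Q ∧
        ∀ P : Set (Set V), Setoid.IsPartition P → Refines P (P0 G) → PartStable G P →
          Refines P Q) := by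
  obtain ⟨⟨hne, hlab, hfwd, hbwd⟩, hmax⟩ := hZ
  -- Z is reflexive
  have hrefl : ∀ x, Z x x := by
    intro x
    refine hmax (fun a b => a = b) ⟨⟨x, x, rfl⟩, fun a b h => by rw [h], ?_, ?_⟩ x x rfl
    · rintro a b y r rfl _; exact ⟨y, rfl, le_rfl⟩
    · rintro a b y r rfl _; exact ⟨y, rfl, le_rfl⟩
  -- Z is symmetric
  have hsymm : ∀ {x x'}, Z x x' → Z x' x := by
    intro x x' h
    refine hmax (fun a b => Z b a) ⟨⟨x', x, h⟩, fun a b hb => (hlab b a hb).symm, ?_, ?_⟩ x' x h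
    · intro a b y r hba hpos
      obtain ⟨y0, h1, h2⟩ := hbwd b a y r hba hpos
      exact ⟨y0, h1, h2⟩
    · intro a b y' r hba hpos
      obtain ⟨y0, h1, h2⟩ := hfwd b a y' r hba hpos
      exact ⟨y0, h1, h2⟩
  -- Z is transitive
  have htr : ∀ {x y z}, Z x y → Z y z → Z x z := by
    intro x y z hxy hyz
    refine hmax (fun a b => ∃ m, Z a m ∧ Z m b) ⟨?_, ?_, ?_, ?_⟩ x z ⟨y, hxy, hyz⟩
    · exact ⟨x, z, y, hxy, hyz⟩
    · rintro a b ⟨m, h1, h2⟩; exact (hlab a m h1).trans (hlab m b h2)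
    · rintro a b yy r ⟨m, h1, h2⟩ hpos
      obtain ⟨y1, hz1, hle1⟩ := hfwd a m yy r h1 hpos
      obtain ⟨y2, hz2, hle2⟩ := hfwd m b y1 r h2 (lt_of_lt_of_le hpos hle1)
      exact ⟨y2, ⟨y1, hz1, hz2⟩, hle1.trans hle2⟩
    · rintro a b yy r ⟨m, h1, h2⟩ hpos
      obtain ⟨y1, hz1, hle1⟩ := hbwd m b yy r h2 hpos
      obtain ⟨y2, hz2, hle2⟩ := hbwd a m y1 r h1 (lt_of_lt_of_le hpos hle1)
      exact ⟨y2, ⟨y1, hz2, hz1⟩, hle1.trans hle2⟩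
  -- classesOf Z is a partition
  have hpartZ : Setoid.IsPartition (classesOf Z) := by
    constructor
    · rintro ⟨x, hx⟩
      have : x ∈ ({x' | Z x x'} : Set V) := hrefl x
      rw [← hx] at this
      exact this
    · intro a
      refine ⟨{x' | Z a x'}, ⟨⟨a, rfl⟩, hrefl a⟩, ?_⟩
      rintro s ⟨⟨x, rfl⟩, has⟩
      ext b
      simp only [Set.mem_setOf_eq]
      exact ⟨fun hxb => htr (hsymm has) hxb, fun hab => htr has hab⟩
  -- classesOf Z refines P0
  have hrefP0 : Refines (classesOf Z) (P0 G) := by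
    rintro X ⟨x, rfl⟩
    refine ⟨_, ⟨x, rfl⟩, ?_⟩
    intro x' hx'
    refine ⟨hlab x x' hx', fun r => le_antisymm ?_ ?_⟩
    · refine supE_le_of_transfer G fun y _ hpos => ?_
      obtain ⟨y', _, h2⟩ := hfwd x x' y r hx' hpos
      exact ⟨y', Set.mem_univ _, h2⟩
    · refine supE_le_of_transfer G fun y' _ hpos => ?_
      obtain ⟨y, _, h2⟩ := hbwd x x' y' r hx' hpos
      exact ⟨y, Set.mem_univ _, h2⟩
  -- classesOf Z is stable
  have hstabZ : PartStable G (classesOf Z) := by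
    rintro Y ⟨z, rfl⟩ r X ⟨w, rfl⟩ x hx x' hx'
    have hxx' : Z x x' := htr (hsymm hx) hx'
    apply le_antisymm
    · refine supE_le_of_transfer G fun y hy hpos => ?_
      obtain ⟨y', h1, h2⟩ := hfwd x x' y r hxx' hpos
      exact ⟨y', htr hy h1, h2⟩
    · refine supE_le_of_transfer G fun y' hy' hpos => ?_
      obtain ⟨y, h1, h2⟩ := hbwd x x' y' r hxx' hpos
      exact ⟨y, htr hy' (hsymm h1), h2⟩
  -- every stable refinement of P0 refines classesOf Z
  have key : ∀ P : Set (Set V), Setoid.IsPartition P → Refines P (P0 G) → PartStable G P →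
      Refines P (classesOf Z) := by
    intro P hP hPr hPs
    have hbis' : IsBisimulation G (fun a b => ∃ X ∈ P, a ∈ X ∧ b ∈ X) := by
      refine ⟨?_, ?_, ?_, ?_⟩
      · obtain ⟨a⟩ := ‹Nonempty V›
        obtain ⟨b, ⟨hbP, hab⟩, _⟩ := hP.2 a
        exact ⟨a, a, b, hbP, hab, hab⟩
      · rintro a b ⟨X, hXP, haX, hbX⟩
        obtain ⟨Y0, hY0, hsub⟩ := hPr X hXP
        obtain ⟨z, rfl⟩ := hY0
        exact ((hsub haX).1).symm.trans (hsub hbX).1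
      · rintro a b y r ⟨X, hXP, haX, hbX⟩ hpos
        obtain ⟨Yb, ⟨hYbP, hyYb⟩, _⟩ := hP.2 y
        have hstab : supE G a r Yb = supE G b r Yb := hPs Yb hYbP r X hXP a haX b hbX
        obtain ⟨y', hy'Yb, hsup⟩ := supE_attained (x := b) (r := r) G ⟨y, hyYb⟩
        refine ⟨y', ⟨Yb, hYbP, hyYb, hy'Yb⟩, ?_⟩
        calc G.edge a r y ≤ supE G a r Yb := le_supE G hyYb
          _ = supE G b r Yb := hstab
          _ = G.edge b r y' := hsup
      · rintro a b y' r ⟨X, hXP, haX, hbX⟩ hpos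
        obtain ⟨Yb, ⟨hYbP, hyYb⟩, _⟩ := hP.2 y'
        have hstab : supE G a r Yb = supE G b r Yb := hPs Yb hYbP r X hXP a haX b hbX
        obtain ⟨y, hyYb2, hsup⟩ := supE_attained (x := a) (r := r) G ⟨y', hyYb⟩
        refine ⟨y, ⟨Yb, hYbP, hyYb2, hyYb⟩, ?_⟩
        calc G.edge b r y' ≤ supE G b r Yb := le_supE G hyYb
          _ = supE G a r Yb := hstab.symm
          _ = G.edge a r y := hsup
    intro X hX
    obtain ⟨x, hx⟩ := partition_block_nonempty hP hX
    exact ⟨{x' | Z x x'}, ⟨x, rfl⟩, fun b hb => hmax _ hbis' x b ⟨X, hX, hx, hb⟩⟩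
  constructor
  · rintro rfl
    exact ⟨hrefP0, hstabZ, key⟩
  · rintro ⟨h1, h2, h3⟩
    exact refines_antisymm hQ hpartZ (key Q hQ h1 h2) (h3 _ hpartZ hrefP0 hstabZ)
end

section
/- Let G = ⟨V, E, L, Σ_V, Σ_E⟩ be a finite fuzzy labeled graph with V nonempty. If ℚ is the partition corresponding to the largest bisimulation of G, then ℚ is a stable refinement of ℙ₀. -/
/-- If `ℚ` is the partition corresponding to the largest bisimulation of a finite
fuzzy graph `G` (with nonempty vertex set), then `ℚ` is a stable refinement of `ℙ₀`. -/
theorem partition_of_largest_bisim_is_stable_refinement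
    {V SV SE : Type*} [Fintype V] [Fintype SV] [Fintype SE] [Nonempty V]
    (G : FuzzyGraph V SV SE) (Z : V → V → Prop)
    (hZ : IsBisimulation G Z ∧
      ∀ Z' : V → V → Prop, IsBisimulation G Z' → ∀ x x', Z' x x' → Z x x')
    (Q : Set (Set V)) (hQeq : Q = classesOf Z) :
    Refines Q (P0 G) ∧ PartStable G Q := by
  obtain ⟨⟨hne, hlab, hfwd, hbwd⟩, hmax⟩ := hZ
  have hrefl : ∀ x, Z x x := by
    intro x
    refine hmax (fun a b => a = b) ?_ x x rfl
    refine ⟨⟨x, x, rfl⟩, ?_, ?_, ?_⟩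
    · rintro a b rfl; rfl
    · rintro a b y r rfl h; exact ⟨y, rfl, le_refl _⟩
    · rintro a b y r rfl h; exact ⟨y, rfl, le_refl _⟩
  have hsymm : ∀ x x', Z x x' → Z x' x := by
    intro x x' h
    refine hmax (fun a b => Z b a) ?_ x' x h
    obtain ⟨u, v, huv⟩ := hne
    refine ⟨⟨v, u, huv⟩, ?_, ?_, ?_⟩
    · intro a b hba; exact (hlab b a hba).symm
    · intro a b y r hba hy
      obtain ⟨y', hy', hle⟩ := hbwd b a y r hba hy
      exact ⟨y', hy', hle⟩
    · intro a b y' r hba hy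
      obtain ⟨y, hy, hle⟩ := hfwd b a y' r hba hy
      exact ⟨y, hy, hle⟩
  have htrans : ∀ x y z, Z x y → Z y z → Z x z := by
    intro x y z hxy hyz
    refine hmax (fun a c => ∃ b, Z a b ∧ Z b c) ?_ x z ⟨y, hxy, hyz⟩
    refine ⟨⟨x, z, y, hxy, hyz⟩, ?_, ?_, ?_⟩
    · rintro a c ⟨b, hab, hbc⟩; exact (hlab a b hab).trans (hlab b c hbc)
    · rintro a c w r ⟨b, hab, hbc⟩ hw
      obtain ⟨w', hw', hle⟩ := hfwd a b w r hab hw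
      obtain ⟨w'', hw'', hle'⟩ := hfwd b c w' r hbc (lt_of_lt_of_le hw hle)
      exact ⟨w'', ⟨w', hw', hw''⟩, hle.trans hle'⟩
    · rintro a c w' r ⟨b, hab, hbc⟩ hw
      obtain ⟨w, hw2, hle⟩ := hbwd b c w' r hbc hw
      obtain ⟨w0, hw0, hle'⟩ := hbwd a b w r hab (lt_of_lt_of_le hw hle)
      exact ⟨w0, ⟨w, hw0, hw2⟩, hle.trans hle'⟩
  have hsup : ∀ (x x' : V) (r : SE) (Y : Set V),
      (∀ y y', y ∈ Y → Z y y' → y' ∈ Y) → Z x x' →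
      supE G x r Y ≤ supE G x' r Y := by
    intro x x' r Y hYcl hxx'
    refine iSup₂_le fun y hy => ?_
    by_cases h0 : 0 < G.edge x r y
    · obtain ⟨y', hy', hle⟩ := hfwd x x' y r hxx' h0
      exact le_trans hle (le_iSup₂ (f := fun y _ => G.edge x' r y) y' (hYcl y y' hy hy'))
    · have h : G.edge x r y = 0 := le_antisymm (not_lt.mp h0) unitInterval.nonneg'
      rw [h]
      exact unitInterval.nonneg'
  constructor
  · intro X hX
    rw [hQeq] at hX
    obtain ⟨x, rfl⟩ := hX
    refine ⟨{x' | G.lab x = G.lab x' ∧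
      ∀ r : SE, supE G x r Set.univ = supE G x' r Set.univ}, ⟨x, rfl⟩, ?_⟩
    intro x' hx'
    refine ⟨hlab x x' hx', fun r => le_antisymm ?_ ?_⟩
    · exact hsup x x' r Set.univ (fun _ _ _ _ => trivial) hx'
    · exact hsup x' x r Set.univ (fun _ _ _ _ => trivial) (hsymm x x' hx')
  · intro Y hY r X hX
    rw [hQeq] at hY hX
    obtain ⟨z, rfl⟩ := hY
    obtain ⟨w, rfl⟩ := hX
    intro x hx x' hx'
    have hxx' : Z x x' := htrans x w x' (hsymm w x hx) hx'
    have hcl : ∀ y y', y ∈ {v | Z z v} → Z y y' → y' ∈ {v | Z z v} :=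
      fun y y' hy hyy' => htrans z y y' hy hyy'
    exact le_antisymm (hsup x x' r _ hcl hxx') (hsup x' x r _ hcl (hsymm x x' hxx'))
end

section
/- Let G = ⟨V, E, L, Σ_V, Σ_E⟩ be a fuzzy labeled graph, let 𝕊 be a stable partition of V that is a refinement of a partition ℙ, which in turn is a refinement of a partition ℚ, and let Y' ∈ ℙ and Y ∈ ℚ be blocks with Y' ⊊ Y. Then, for any r ∈ Σ_E, 𝕊 is stable with respect to both ⟨Y', r⟩ and ⟨Y ∖ Y', r⟩; consequently, 𝕊 is a refinement of every partition ℙ' that is the coarsest refinement of ℙ stable with respect to both ⟨Y', r⟩ and ⟨Y ∖ Y', r⟩. -/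
/-- Let `𝕊` be a stable partition refining `ℙ`, which refines `ℚ`, and let
`Y' ∈ ℙ`, `Y ∈ ℚ` with `Y' ⊊ Y`. Then `𝕊` is stable w.r.t. both `⟨Y',r⟩` and
`⟨Y ∖ Y',r⟩`; consequently `𝕊` refines every coarsest refinement of `ℙ` that is
stable w.r.t. both `⟨Y',r⟩` and `⟨Y ∖ Y',r⟩`. -/
theorem stable_refinement_refines_split
    {V SV SE : Type*} (G : FuzzyGraph V SV SE)
    (S P Q : Set (Set V))
    (hS : Setoid.IsPartition S) (hP : Setoid.IsPartition P) (hQ : Setoid.IsPartition Q)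
    (hSstable : PartStable G S) (hSP : Refines S P) (hPQ : Refines P Q)
    (Y' Y : Set V) (hY' : Y' ∈ P) (hY : Y ∈ Q) (hss : Y' ⊂ Y) (r : SE) :
    (PartStableWith G S Y' r ∧ PartStableWith G S (Y \ Y') r) ∧
      ∀ P' : Set (Set V),
        (Setoid.IsPartition P' ∧ Refines P' P ∧
          PartStableWith G P' Y' r ∧ PartStableWith G P' (Y \ Y') r ∧
          ∀ P'' : Set (Set V), Setoid.IsPartition P'' → Refines P'' P →
            PartStableWith G P'' Y' r → PartStableWith G P'' (Y \ Y') r →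
            Refines P'' P') →
        Refines S P' := by
  have stable_of_blocks : ∀ Z : Set V,
      (∀ W ∈ S, (W ∩ Z).Nonempty → W ⊆ Z) → PartStableWith G S Z r := by
    intro Z hZ X hX x hx x' hx'
    have key : ∀ a b : V, a ∈ X → b ∈ X → supE G a r Z ≤ supE G b r Z := by
      intro a b ha hb
      refine iSup₂_le fun y hy => ?_
      obtain ⟨W, ⟨hW, hyW⟩, -⟩ := hS.2 y
      have hWZ : W ⊆ Z := hZ W hW ⟨y, hyW, hy⟩
      have h1 : G.edge a r y ≤ supE G a r W :=
        le_iSup₂ (f := fun y (_ : y ∈ W) => G.edge a r y) y hyW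
      have h2 : supE G a r W = supE G b r W := hSstable W hW r X hX a ha b hb
      have h3 : supE G b r W ≤ supE G b r Z :=
        iSup₂_le fun z hz => le_iSup₂ (f := fun z (_ : z ∈ Z) => G.edge b r z) z (hWZ hz)
      exact h1.trans (h2.le.trans h3)
    exact le_antisymm (key x x' hx hx') (key x' x hx' hx)
  have hY'blocks : ∀ W ∈ S, (W ∩ Y').Nonempty → W ⊆ Y' := by
    intro W hW ⟨a, haW, haY'⟩
    obtain ⟨B, hB, hWB⟩ := hSP W hW
    obtain ⟨B0, -, huniq⟩ := hP.2 a
    have hBY' : B = Y' := by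
      rw [huniq B ⟨hB, hWB haW⟩, huniq Y' ⟨hY', haY'⟩]
    exact hBY' ▸ hWB
  have hYdblocks : ∀ W ∈ S, (W ∩ (Y \ Y')).Nonempty → W ⊆ Y \ Y' := by
    intro W hW ⟨a, haW, haY, haY'⟩
    obtain ⟨B, hB, hWB⟩ := hSP W hW
    obtain ⟨C, hC, hBC⟩ := hPQ B hB
    obtain ⟨C0, -, huniq⟩ := hQ.2 a
    have hCY : C = Y := by
      rw [huniq C ⟨hC, hBC (hWB haW)⟩, huniq Y ⟨hY, haY⟩]
    have hWY : W ⊆ Y := hCY ▸ (hWB.trans hBC)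
    have hWY' : ∀ w ∈ W, w ∉ Y' := by
      intro w hw hwY'
      exact haY' (hY'blocks W hW ⟨w, hw, hwY'⟩ haW)
    exact fun w hw => ⟨hWY hw, hWY' w hw⟩
  have hst1 : PartStableWith G S Y' r := stable_of_blocks Y' hY'blocks
  have hst2 : PartStableWith G S (Y \ Y') r := stable_of_blocks (Y \ Y') hYdblocks
  refine ⟨⟨hst1, hst2⟩, ?_⟩
  rintro P' ⟨-, -, -, -, hcoarse⟩
  exact hcoarse S hS hSP hst1 hst2
end

section
/- For any finite fuzzy labeled graph G = ⟨V, E, L, Σ_V, Σ_E⟩, if 𝒵 is a nonempty set of s-bisimulations of G, then the union ⋃𝒵 is also an s-bisimulation of G. -/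
/-- `x↑_r = {y ∈ V | E(x,r,y) > 0}`. -/
def upSet {V SV SE : Type*} (G : FuzzyGraph V SV SE) (x : V) (r : SE) : Set V :=
  {y | 0 < G.edge x r y}

/-- A nonempty binary relation `Z ⊆ V × V` is an s-bisimulation (crisp bisimulation
with counting successors) of `G`. -/
def IsSBisimulation {V SV SE : Type*} (G : FuzzyGraph V SV SE) (Z : V → V → Prop) : Prop :=
  (∃ x x', Z x x') ∧
  (∀ x x', Z x x' → G.lab x = G.lab x') ∧
  (∀ x x' (r : SE), Z x x' →
    ∃ h : upSet G x r → upSet G x' r, Function.Bijective h ∧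
      ∀ y : upSet G x r, Z ↑y ↑(h y) ∧ G.edge x r ↑y = G.edge x' r ↑(h y))

/-- If `𝒵` is a nonempty set of s-bisimulations of a finite fuzzy graph `G`,
then `⋃𝒵` is an s-bisimulation of `G`. -/
theorem sUnion_isSBisimulation {V SV SE : Type*}
    [Fintype V] [Fintype SV] [Fintype SE]
    (G : FuzzyGraph V SV SE)
    (𝒵 : Set (V → V → Prop)) (hne : 𝒵.Nonempty)
    (h : ∀ Z ∈ 𝒵, IsSBisimulation G Z) :
    IsSBisimulation G (fun x x' => ∃ Z ∈ 𝒵, Z x x') := by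
  obtain ⟨Z0, hZ0⟩ := hne
  obtain ⟨⟨x, x', hxx'⟩, -, -⟩ := h Z0 hZ0
  refine ⟨⟨x, x', Z0, hZ0, hxx'⟩, ?_, ?_⟩
  · rintro a a' ⟨Z, hZ, haa'⟩
    exact (h Z hZ).2.1 a a' haa'
  · rintro a a' r ⟨Z, hZ, haa'⟩
    obtain ⟨f, hf, hprop⟩ := (h Z hZ).2.2 a a' r haa'
    exact ⟨f, hf, fun y => ⟨⟨Z, hZ, (hprop y).1⟩, (hprop y).2⟩⟩
end

section
/- For any finite fuzzy labeled graph G = ⟨V, E, L, Σ_V, Σ_E⟩ with V nonempty, there exists a largest s-bisimulation of G (an s-bisimulation of G that contains every s-bisimulation of G), and this largest s-bisimulation is an equivalence relation on V. -/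
lemma eq_sbisim {V SV SE : Type*} [Nonempty V] (G : FuzzyGraph V SV SE) :
    IsSBisimulation G (· = ·) := by
  refine ⟨⟨Classical.arbitrary V, Classical.arbitrary V, rfl⟩, ?_, ?_⟩
  · rintro x x' rfl; rfl
  · rintro x x' r rfl
    exact ⟨id, Function.bijective_id, fun y => ⟨rfl, rfl⟩⟩

lemma inv_sbisim {V SV SE : Type*} (G : FuzzyGraph V SV SE) {Z : V → V → Prop}
    (hZ : IsSBisimulation G Z) : IsSBisimulation G (fun a b => Z b a) := by
  obtain ⟨⟨x, x', hxx'⟩, hlab, hstep⟩ := hZ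
  refine ⟨⟨x', x, hxx'⟩, fun a b h => (hlab b a h).symm, ?_⟩
  intro a b r hba
  obtain ⟨h, hb, hprop⟩ := hstep b a r hba
  let e := Equiv.ofBijective h hb
  refine ⟨e.symm, e.symm.bijective, fun y => ?_⟩
  have := hprop (e.symm y)
  have he : h (e.symm y) = y := e.apply_symm_apply y
  rw [he] at this
  exact ⟨this.1, this.2.symm⟩

lemma comp_sbisim {V SV SE : Type*} (G : FuzzyGraph V SV SE) {Z1 Z2 : V → V → Prop}
    (h1 : IsSBisimulation G Z1) (h2 : IsSBisimulation G Z2) :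
    IsSBisimulation G (fun a c => ∃ b, Z1 a b ∧ Z2 b c) ∨
    ¬ ∃ a c, ∃ b, Z1 a b ∧ Z2 b c := by
  by_cases hne : ∃ a c, ∃ b, Z1 a b ∧ Z2 b c
  · left
    obtain ⟨_, hl1, hs1⟩ := h1
    obtain ⟨_, hl2, hs2⟩ := h2
    refine ⟨hne, ?_, ?_⟩
    · rintro a c ⟨b, hab, hbc⟩
      exact (hl1 a b hab).trans (hl2 b c hbc)
    · rintro a c r ⟨b, hab, hbc⟩
      obtain ⟨f, hf, hfp⟩ := hs1 a b r hab
      obtain ⟨g, hg, hgp⟩ := hs2 b c r hbc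
      refine ⟨g ∘ f, hg.comp hf, fun y => ?_⟩
      obtain ⟨hy1, hy2⟩ := hfp y
      obtain ⟨hy3, hy4⟩ := hgp (f y)
      exact ⟨⟨f y, hy1, hy3⟩, hy2.trans hy4⟩
  · right; exact hne

/-- The largest s-bisimulation of a finite fuzzy graph (with nonempty vertex set)
exists and is an equivalence relation. -/
theorem largest_sBisimulation_exists_and_equivalence {V SV SE : Type*}
    [Fintype V] [Fintype SV] [Fintype SE] [Nonempty V]
    (G : FuzzyGraph V SV SE) :
    ∃ Z : V → V → Prop, IsSBisimulation G Z ∧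
      (∀ Z' : V → V → Prop, IsSBisimulation G Z' → ∀ x x', Z' x x' → Z x x') ∧
      Equivalence Z := by
  refine ⟨fun x x' => ∃ Z', IsSBisimulation G Z' ∧ Z' x x', ⟨?_, ?_, ?_⟩, ?_, ?_, ?_, ?_⟩
  · exact ⟨Classical.arbitrary V, Classical.arbitrary V, _, eq_sbisim G, rfl⟩
  · rintro x x' ⟨Z', hZ', hxx'⟩
    exact hZ'.2.1 x x' hxx'
  · rintro x x' r ⟨Z', hZ', hxx'⟩
    obtain ⟨h, hb, hprop⟩ := hZ'.2.2 x x' r hxx'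
    exact ⟨h, hb, fun y => ⟨⟨Z', hZ', (hprop y).1⟩, (hprop y).2⟩⟩
  · exact fun Z' hZ' x x' h => ⟨Z', hZ', h⟩
  · exact fun x => ⟨_, eq_sbisim G, rfl⟩
  · rintro x y ⟨Z', hZ', hxy⟩
    exact ⟨_, inv_sbisim G hZ', hxy⟩
  · rintro x y z ⟨Z1, hZ1, hxy⟩ ⟨Z2, hZ2, hyz⟩
    rcases comp_sbisim G hZ1 hZ2 with h | h
    · exact ⟨_, h, y, hxy, hyz⟩
    · exact absurd ⟨x, z, y, hxy, hyz⟩ h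
end

section
/- Let G = ⟨V, E, L, Σ_V, Σ_E⟩ be a finite fuzzy labeled graph with V nonempty, and let ℚ be a partition of V. Then ℚ is the partition corresponding to the largest s-bisimulation of G if and only if ℚ is the coarsest s-stable refinement of ℙ₁, i.e., ℚ is an s-stable refinement of ℙ₁ and every s-stable refinement of ℙ₁ is a refinement of ℚ. -/
/-- `x↑_{r(d)}Y = {y ∈ Y | E(x,r,y) = d}`. -/
def rSlice {V SV SE : Type*} (G : FuzzyGraph V SV SE)
    (x : V) (r : SE) (d : unitInterval) (Y : Set V) : Set V :=
  {y ∈ Y | G.edge x r y = d}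

/-- A set `X ⊆ V` is s-stable w.r.t. `⟨Y,r⟩` if `|x↑_{r(d)}Y| = |x'↑_{r(d)}Y|`
for all `x, x' ∈ X` and `d ∈ (0,1]`. -/
def SStableWith {V SV SE : Type*} (G : FuzzyGraph V SV SE)
    (X Y : Set V) (r : SE) : Prop :=
  ∀ x ∈ X, ∀ x' ∈ X, ∀ d : unitInterval, 0 < d →
    Cardinal.mk ↥(rSlice G x r d Y) = Cardinal.mk ↥(rSlice G x' r d Y)

/-- A partition `ℙ` is s-stable w.r.t. `⟨Y,r⟩` if every block of `ℙ` is. -/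
def PartSStableWith {V SV SE : Type*} (G : FuzzyGraph V SV SE)
    (P : Set (Set V)) (Y : Set V) (r : SE) : Prop :=
  ∀ X ∈ P, SStableWith G X Y r

/-- A partition `ℙ` is s-stable if it is s-stable w.r.t. `⟨Y,r⟩`
for all blocks `Y ∈ ℙ` and all edge labels `r`. -/
def PartSStable {V SV SE : Type*} (G : FuzzyGraph V SV SE) (P : Set (Set V)) : Prop :=
  ∀ Y ∈ P, ∀ r : SE, PartSStableWith G P Y r

/-- `ℙ₁`: the partition of `V` corresponding to the equivalence relation
`{(x,x') | L(x) = L(x') and |x↑_{r(d)}V| = |x'↑_{r(d)}V| for all r and d ∈ (0,1]}`. -/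
def P1 {V SV SE : Type*} (G : FuzzyGraph V SV SE) : Set (Set V) :=
  classesOf (fun x x' => G.lab x = G.lab x' ∧
    ∀ (r : SE) (d : unitInterval), 0 < d →
      Cardinal.mk ↥(rSlice G x r d Set.univ) = Cardinal.mk ↥(rSlice G x' r d Set.univ))

------------------------------------------------------------------------
-- auxiliary lemmas
------------------------------------------------------------------------

section Aux

variable {V SV SE : Type*} (G : FuzzyGraph V SV SE)

/-- Glue fiberwise equivalences into a global one. -/
lemma glue_equiv {A B : Type u} {I : Type v} (f : A → I) (g : B → I)
    (h : ∀ i, Cardinal.mk {a // f a = i} = Cardinal.mk {b // g b = i}) :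
    ∃ e : A ≃ B, ∀ a, g (e a) = f a := by
  have h' : ∀ i, Nonempty ({a // f a = i} ≃ {b // g b = i}) := fun i => Cardinal.eq.mp (h i)
  let e := fun i => (h' i).some
  refine ⟨(Equiv.sigmaFiberEquiv f).symm.trans
    ((Equiv.sigmaCongrRight e).trans (Equiv.sigmaFiberEquiv g)), fun a => ?_⟩
  exact (e (f a) ⟨a, rfl⟩).2

/-- extract an equivalence from a bisimulation clause -/
lemma bisim_equiv {Z : V → V → Prop} (hb : IsSBisimulation G Z) {x x' : V} (h : Z x x')
    (r : SE) :
    ∃ e : ↥(upSet G x r) ≃ ↥(upSet G x' r),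
      ∀ y : ↥(upSet G x r), Z ↑y ↑(e y) ∧ G.edge x r ↑y = G.edge x' r ↑(e y) := by
  obtain ⟨h, hbij, hp⟩ := hb.2.2 x x' r h
  exact ⟨Equiv.ofBijective h hbij, hp⟩

variable [Nonempty V]

/-- The largest s-bisimulation is an equivalence relation. -/
lemma largest_equiv {Z : V → V → Prop}
    (hZ : IsSBisimulation G Z ∧
      ∀ Z' : V → V → Prop, IsSBisimulation G Z' → ∀ x x', Z' x x' → Z x x') :
    Equivalence Z := by
  obtain ⟨⟨a0, b0, hab0⟩, hlab, _⟩ := hZ.1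
  have hrefl : ∀ x, Z x x := by
    intro x
    refine hZ.2 (fun a b => a = b) ?_ x x rfl
    refine ⟨⟨Classical.arbitrary V, _, rfl⟩, ?_, ?_⟩
    · rintro a b rfl; rfl
    · rintro a b r rfl
      exact ⟨id, Function.bijective_id, fun y => ⟨rfl, rfl⟩⟩
  have hsymm : ∀ x y, Z x y → Z y x := by
    intro x y hxy
    refine hZ.2 (fun a b => Z b a) ?_ y x hxy
    refine ⟨⟨b0, a0, hab0⟩, fun a b h => (hlab b a h).symm, ?_⟩
    intro a b r h
    obtain ⟨e, he⟩ := bisim_equiv G hZ.1 h r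
    refine ⟨e.symm, e.symm.bijective, fun w => ?_⟩
    have := he (e.symm w)
    rw [e.apply_symm_apply] at this
    exact ⟨this.1, this.2.symm⟩
  have htrans : ∀ x y z, Z x y → Z y z → Z x z := by
    intro x y z hxy hyz
    refine hZ.2 (fun a b => ∃ c, Z a c ∧ Z c b) ?_ x z ⟨y, hxy, hyz⟩
    refine ⟨⟨x, z, y, hxy, hyz⟩, ?_, ?_⟩
    · rintro a b ⟨c, hac, hcb⟩
      exact (hlab a c hac).trans (hlab c b hcb)
    · rintro a b r ⟨c, hac, hcb⟩
      obtain ⟨e1, he1⟩ := bisim_equiv G hZ.1 hac r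
      obtain ⟨e2, he2⟩ := bisim_equiv G hZ.1 hcb r
      refine ⟨e1.trans e2, (e1.trans e2).bijective, fun w => ?_⟩
      exact ⟨⟨↑(e1 w), (he1 w).1, (he2 (e1 w)).1⟩, (he1 w).2.trans (he2 (e1 w)).2⟩
  exact ⟨hrefl, fun h => hsymm _ _ h, fun h h' => htrans _ _ _ h h'⟩

omit [Nonempty V] in
/-- For a bisimulation `Z`, `Z x x'` gives equality of slice cardinalities over
any `Z`-closed set. -/
lemma slice_card_eq {Z : V → V → Prop} (hb : IsSBisimulation G Z)
    (hsymm : ∀ a b, Z a b → Z b a)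
    {x x' : V} (hxx' : Z x x') (Y : Set V) (hY : ∀ a b, Z a b → a ∈ Y → b ∈ Y)
    (r : SE) (d : unitInterval) (hd : 0 < d) :
    Cardinal.mk ↥(rSlice G x r d Y) = Cardinal.mk ↥(rSlice G x' r d Y) := by
  obtain ⟨e, he⟩ := bisim_equiv G hb hxx' r
  apply Cardinal.mk_congr
  refine ⟨fun v => ⟨↑(e ⟨↑v, lt_of_lt_of_eq hd v.2.2.symm⟩), ?_, ?_⟩,
          fun w => ⟨↑(e.symm ⟨↑w, lt_of_lt_of_eq hd w.2.2.symm⟩), ?_, ?_⟩, ?_, ?_⟩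
  · exact hY _ _ (he ⟨↑v, lt_of_lt_of_eq hd v.2.2.symm⟩).1 v.2.1
  · exact ((he ⟨↑v, lt_of_lt_of_eq hd v.2.2.symm⟩).2).symm.trans v.2.2
  · set u := e.symm ⟨↑w, lt_of_lt_of_eq hd w.2.2.symm⟩ with hu
    have h1 := he u
    rw [hu, e.apply_symm_apply] at h1
    exact hY _ _ (hsymm _ _ h1.1) w.2.1
  · set u := e.symm ⟨↑w, lt_of_lt_of_eq hd w.2.2.symm⟩ with hu
    have h1 := he u
    rw [hu, e.apply_symm_apply] at h1
    exact h1.2.trans w.2.2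
  · intro v
    apply Subtype.ext
    have h := congrArg Subtype.val (e.symm_apply_apply ⟨↑v, lt_of_lt_of_eq hd v.2.2.symm⟩)
    exact h
  · intro w
    apply Subtype.ext
    have h := congrArg Subtype.val (e.apply_symm_apply ⟨↑w, lt_of_lt_of_eq hd w.2.2.symm⟩)
    exact h

end Aux

section Main

variable {V SV SE : Type*} (G : FuzzyGraph V SV SE)

lemma classesOf_isPartition {Z : V → V → Prop} (hE : Equivalence Z) :
    Setoid.IsPartition (classesOf Z) := by
  constructor
  · rintro ⟨x, hx⟩
    have : x ∈ ({x' | Z x x'} : Set V) := hE.refl x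
    rw [← hx] at this
    exact this
  · intro a
    refine ⟨{x' | Z a x'}, ⟨⟨a, rfl⟩, hE.refl a⟩, ?_⟩
    rintro y ⟨⟨x, rfl⟩, hay⟩
    ext v
    exact ⟨fun h => hE.trans (hE.symm hay) h, fun h => hE.trans hay h⟩

variable [Nonempty V]

lemma classesOf_refines_P1 {Z : V → V → Prop}
    (hZ : IsSBisimulation G Z ∧
      ∀ Z' : V → V → Prop, IsSBisimulation G Z' → ∀ x x', Z' x x' → Z x x') :
    Refines (classesOf Z) (P1 G) := by
  have hE := largest_equiv G hZ
  rintro X ⟨x, rfl⟩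
  refine ⟨_, ⟨x, rfl⟩, ?_⟩
  intro x' hx'
  exact ⟨hZ.1.2.1 x x' hx', fun r d hd =>
    slice_card_eq G hZ.1 (fun _ _ h => hE.symm h) hx' Set.univ
      (fun _ _ _ _ => trivial) r d hd⟩

lemma classesOf_sstable {Z : V → V → Prop}
    (hZ : IsSBisimulation G Z ∧
      ∀ Z' : V → V → Prop, IsSBisimulation G Z' → ∀ x x', Z' x x' → Z x x') :
    PartSStable G (classesOf Z) := by
  have hE := largest_equiv G hZ
  rintro Y ⟨y0, rfl⟩ r X ⟨x0, rfl⟩ x hx x' hx' d hd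
  have hxx' : Z x x' := hE.trans (hE.symm hx) hx'
  exact slice_card_eq G hZ.1 (fun _ _ h => hE.symm h) hxx' _
    (fun a b hab ha => hE.trans ha hab) r d hd

lemma sstable_refines_classes {Z : V → V → Prop}
    (hZ : IsSBisimulation G Z ∧
      ∀ Z' : V → V → Prop, IsSBisimulation G Z' → ∀ x x', Z' x x' → Z x x')
    (P : Set (Set V)) (hP : Setoid.IsPartition P)
    (href : Refines P (P1 G)) (hst : PartSStable G P) :
    Refines P (classesOf Z) := by
  classical
  have h2 := hP.2
  choose blk hblk using h2
  have hblk_uniq : ∀ (a : V) (Y : Set V), Y ∈ P → a ∈ Y → Y = blk a :=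
    fun a Y hY haY => (hblk a).2 Y ⟨hY, haY⟩
  set Zp : V → V → Prop := fun a b => blk a = blk b with hZp
  have hbis : IsSBisimulation G Zp := by
    refine ⟨⟨Classical.arbitrary V, Classical.arbitrary V, rfl⟩, ?_, ?_⟩
    · intro x x' h
      obtain ⟨Y1, hY1, hsub⟩ := href (blk x) (hblk x).1.1
      obtain ⟨a, rfl⟩ := hY1
      have hx : x ∈ blk x := (hblk x).1.2
      have hx' : x' ∈ blk x := by
        have := (hblk x').1.2
        rw [← h] at this
        exact this
      exact ((hsub hx).1).symm.trans (hsub hx').1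
    · intro x x' r h
      set f : ↥(upSet G x r) → Set V × unitInterval :=
        fun y => (blk ↑y, G.edge x r ↑y) with hf
      set g : ↥(upSet G x' r) → Set V × unitInterval :=
        fun y => (blk ↑y, G.edge x' r ↑y) with hg
      have hfib : ∀ i, Cardinal.mk {a // f a = i} = Cardinal.mk {b // g b = i} := by
        rintro ⟨Y, d⟩
        by_cases hd : 0 < d
        · by_cases hYP : Y ∈ P
          · have key : ∀ (z : V),
                Cardinal.mk {y : ↥(upSet G z r) // (blk ↑y, G.edge z r ↑y) = (Y, d)}
                  = Cardinal.mk ↥(rSlice G z r d Y) := by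
              intro z
              apply Cardinal.mk_congr
              refine ⟨fun y => ⟨↑↑y, ?_, ?_⟩,
                      fun v => ⟨⟨↑v, lt_of_lt_of_eq hd v.2.2.symm⟩, ?_⟩, ?_, ?_⟩
              · have h1 : blk ↑↑y = Y := congrArg Prod.fst y.2
                have h2 := (hblk ↑↑y).1.2
                rw [h1] at h2
                exact h2
              · exact congrArg Prod.snd y.2
              · have h1 : Y = blk ↑v := hblk_uniq ↑v Y hYP v.2.1
                exact Prod.ext h1.symm v.2.2
              · intro y; apply Subtype.ext; apply Subtype.ext; rfl
              · intro v; apply Subtype.ext; rfl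
            have hx : x ∈ blk x := (hblk x).1.2
            have hx' : x' ∈ blk x := by
              have := (hblk x').1.2
              rw [← h] at this
              exact this
            rw [hf, hg, key x, key x']
            exact hst Y hYP r (blk x) (hblk x).1.1 x hx x' hx' d hd
          · have h1 : IsEmpty {a // f a = (Y, d)} := by
              refine ⟨fun y => hYP ?_⟩
              have h3 : blk ↑↑y = Y := congrArg Prod.fst y.2
              have h4 := (hblk ↑↑y).1.1
              rw [h3] at h4
              exact h4
            have h2 : IsEmpty {b // g b = (Y, d)} := by
              refine ⟨fun y => hYP ?_⟩
              have h3 : blk ↑↑y = Y := congrArg Prod.fst y.2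
              have h4 := (hblk ↑↑y).1.1
              rw [h3] at h4
              exact h4
            rw [Cardinal.mk_eq_zero_iff.mpr h1, Cardinal.mk_eq_zero_iff.mpr h2]
        · have h1 : IsEmpty {a // f a = (Y, d)} := by
            refine ⟨fun y => hd ?_⟩
            have he : G.edge x r ↑↑y = d := congrArg Prod.snd y.2
            exact lt_of_lt_of_eq (↑y : ↥(upSet G x r)).2 he
          have h2 : IsEmpty {b // g b = (Y, d)} := by
            refine ⟨fun y => hd ?_⟩
            have he : G.edge x' r ↑↑y = d := congrArg Prod.snd y.2
            exact lt_of_lt_of_eq (↑y : ↥(upSet G x' r)).2 he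
          rw [Cardinal.mk_eq_zero_iff.mpr h1, Cardinal.mk_eq_zero_iff.mpr h2]
      obtain ⟨e, he⟩ := glue_equiv f g hfib
      refine ⟨e, e.bijective, fun y => ?_⟩
      have h1 : blk ↑(e y) = blk ↑y := congrArg Prod.fst (he y)
      have h2 : G.edge x' r ↑(e y) = G.edge x r ↑y := congrArg Prod.snd (he y)
      exact ⟨h1.symm, h2.symm⟩
  intro X hX
  obtain ⟨x0, hx0⟩ : X.Nonempty :=
    Set.nonempty_iff_ne_empty.mpr (fun hh => hP.1 (hh ▸ hX))
  refine ⟨{x' | Z x0 x'}, ⟨x0, rfl⟩, fun v hv => ?_⟩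
  refine hZ.2 Zp hbis x0 v ?_
  have e1 : X = blk x0 := hblk_uniq x0 X hX hx0
  have e2 : X = blk v := hblk_uniq v X hX hv
  exact e1.symm.trans e2

omit [Nonempty V] in
lemma refines_subset {P Q : Set (Set V)} (hP : Setoid.IsPartition P)
    (h1 : Refines P Q) (h2 : Refines Q P) : P ⊆ Q := by
  intro X hX
  obtain ⟨Y, hY, hXY⟩ := h1 X hX
  obtain ⟨X', hX', hYX'⟩ := h2 Y hY
  obtain ⟨x, hx⟩ : X.Nonempty :=
    Set.nonempty_iff_ne_empty.mpr (fun hh => hP.1 (hh ▸ hX))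
  obtain ⟨b, _, huniq⟩ := hP.2 x
  have e1 : X = b := huniq X ⟨hX, hx⟩
  have e2 : X' = b := huniq X' ⟨hX', hYX' (hXY hx)⟩
  have e3 : X = Y := Set.Subset.antisymm hXY ((e1.trans e2.symm) ▸ hYX')
  exact e3 ▸ hY

end Main


/-- For a finite fuzzy graph `G` with nonempty vertex set: a partition `ℚ` of `V`
is the partition corresponding to the largest s-bisimulation of `G` iff it is the
coarsest s-stable refinement of `ℙ₁`. -/
theorem partition_of_largest_sBisim_iff_coarsest_sStable_refinement
    {V SV SE : Type*} [Fintype V] [Fintype SV] [Fintype SE] [Nonempty V]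
    (G : FuzzyGraph V SV SE) (Z : V → V → Prop)
    (hZ : IsSBisimulation G Z ∧
      ∀ Z' : V → V → Prop, IsSBisimulation G Z' → ∀ x x', Z' x x' → Z x x')
    (Q : Set (Set V)) (hQ : Setoid.IsPartition Q) :
    Q = classesOf Z ↔
      (Refines Q (P1 G) ∧ PartSStable G Q ∧
        ∀ P : Set (Set V), Setoid.IsPartition P → Refines P (P1 G) → PartSStable G P →
          Refines P Q) := by
  have hE := largest_equiv G hZ
  have hZpart := classesOf_isPartition hE
  constructor
  · rintro rfl
    exact ⟨classesOf_refines_P1 G hZ, classesOf_sstable G hZ,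
      fun P hP href hst => sstable_refines_classes G hZ P hP href hst⟩
  · rintro ⟨href, hst, hcoarse⟩
    have h1 : Refines Q (classesOf Z) := sstable_refines_classes G hZ Q hQ href hst
    have h2 : Refines (classesOf Z) Q :=
      hcoarse _ hZpart (classesOf_refines_P1 G hZ) (classesOf_sstable G hZ)
    exact Set.Subset.antisymm (refines_subset hQ h1 h2) (refines_subset hZpart h2 h1)
end
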